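/- Let H be a Hopf algebra and V a vector space, with 𝒜 = 𝒜(H,V) the algebra freely generated by H and V. The H-submodule H·V of 𝒜 generated by V (under the adjoint action) is naturally isomorphic, as an H-module, to the free H-module H ⊗ V on V. -/

import Mathlib

open TensorProduct LinearMap

/-- The adjoint action of a Hopf algebra `H` on an algebra `𝒜` containing it (via `ι`):
`h · a = ∑ᵢ h₁ᵢ a S(h₂ᵢ)`, packaged as a bilinear map. -/
noncomputable def adjAct {F H C : Type*} [Field F] [Ring H]
    [HopfAlgebra F H] [Ring C] [Algebra F C] (ι : H →ₐ[F] C) : H →ₗ[F] C →ₗ[F] C :=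
  (TensorProduct.lift ((LinearMap.llcomp F C C C).compl₁₂
      ((LinearMap.mul F C).comp ι.toLinearMap)
      (((LinearMap.mul F C).flip).comp
        (ι.toLinearMap ∘ₗ (HopfAlgebra.antipode (R := F) (A := H)))))) ∘ₗ
    Coalgebra.comul

/-- The linear map `H ⊗ V → 𝒜`, `h ⊗ v ↦ h · v` (adjoint action applied to `V ⊆ 𝒜`). -/
noncomputable def actOnV {F : Type*} {H V 𝒜 : Type*} [Field F] [Ring H] [HopfAlgebra F H]
    [AddCommGroup V] [Module F V] [Ring 𝒜] [Algebra F 𝒜]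
    (ιH : H →ₐ[F] 𝒜) (ιV : V →ₗ[F] 𝒜) : H ⊗[F] V →ₗ[F] 𝒜 :=
  TensorProduct.lift (((LinearMap.llcomp F V 𝒜 𝒜).flip ιV) ∘ₗ adjAct ιH)

namespace HopfAux

variable {F : Type*} [Field F]

section Conv

variable {C A : Type*} [AddCommGroup C] [Module F C] [Ring A] [Algebra F A]

/-- convolution product on `Hom(C, A)` w.r.t. a given comultiplication. -/
noncomputable def conv (Δc : C →ₗ[F] C ⊗[F] C) (f g : C →ₗ[F] A) : C →ₗ[F] A :=
  mul' F A ∘ₗ map f g ∘ₗ Δc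

lemma mul'_assoc' :
    (mul' F A) ∘ₗ (mul' F A).rTensor A =
      (mul' F A) ∘ₗ (mul' F A).lTensor A ∘ₗ (TensorProduct.assoc F A A A).toLinearMap := by
  ext a b c
  simp [mul_assoc]

lemma conv_assoc (Δc : C →ₗ[F] C ⊗[F] C)
    (hco : (TensorProduct.assoc F C C C).toLinearMap ∘ₗ Δc.rTensor C ∘ₗ Δc
      = Δc.lTensor C ∘ₗ Δc)
    (f g k : C →ₗ[F] A) : conv Δc (conv Δc f g) k = conv Δc f (conv Δc g k) := by
  unfold conv
  have h1 : map ((mul' F A) ∘ₗ map f g ∘ₗ Δc) k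
      = (mul' F A).rTensor A ∘ₗ map (map f g) k ∘ₗ Δc.rTensor C := by
    ext x y; simp
  have h2 : map f ((mul' F A) ∘ₗ map g k ∘ₗ Δc)
      = (mul' F A).lTensor A ∘ₗ map f (map g k) ∘ₗ Δc.lTensor C := by
    ext x y; simp
  rw [h1, h2]
  calc mul' F A ∘ₗ ((mul' F A).rTensor A ∘ₗ map (map f g) k ∘ₗ Δc.rTensor C) ∘ₗ Δc
      = (mul' F A ∘ₗ (mul' F A).rTensor A) ∘ₗ map (map f g) k ∘ₗ (Δc.rTensor C ∘ₗ Δc) := by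
        simp only [comp_assoc]
    _ = (mul' F A ∘ₗ (mul' F A).lTensor A) ∘ₗ
          ((TensorProduct.assoc F A A A).toLinearMap ∘ₗ map (map f g) k) ∘ₗ
          (Δc.rTensor C ∘ₗ Δc) := by
        rw [mul'_assoc']; simp only [comp_assoc]
    _ = (mul' F A ∘ₗ (mul' F A).lTensor A) ∘ₗ
          (map f (map g k) ∘ₗ (TensorProduct.assoc F C C C).toLinearMap) ∘ₗ
          (Δc.rTensor C ∘ₗ Δc) := by
        rw [map_map_comp_assoc_eq]
    _ = (mul' F A ∘ₗ (mul' F A).lTensor A) ∘ₗ map f (map g k) ∘ₗ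
          ((TensorProduct.assoc F C C C).toLinearMap ∘ₗ Δc.rTensor C ∘ₗ Δc) := by
        simp only [comp_assoc]
    _ = mul' F A ∘ₗ ((mul' F A).lTensor A ∘ₗ map f (map g k) ∘ₗ Δc.lTensor C) ∘ₗ Δc := by
        rw [hco]; simp only [comp_assoc]

lemma conv_unit_left (Δc : C →ₗ[F] C ⊗[F] C) (εc : C →ₗ[F] F)
    (hε : εc.rTensor C ∘ₗ Δc = (TensorProduct.mk F F C) 1) (f : C →ₗ[F] A) :
    conv Δc ((Algebra.linearMap F A) ∘ₗ εc) f = f := by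
  unfold conv
  have h1 : map ((Algebra.linearMap F A) ∘ₗ εc) f
      = map (Algebra.linearMap F A) f ∘ₗ εc.rTensor C := by ext x y; simp
  rw [h1, comp_assoc, hε]
  ext c
  simp

lemma conv_unit_right (Δc : C →ₗ[F] C ⊗[F] C) (εc : C →ₗ[F] F)
    (hε : εc.lTensor C ∘ₗ Δc = (TensorProduct.mk F C F).flip 1) (f : C →ₗ[F] A) :
    conv Δc f ((Algebra.linearMap F A) ∘ₗ εc) = f := by
  unfold conv
  have h1 : map f ((Algebra.linearMap F A) ∘ₗ εc)
      = map f (Algebra.linearMap F A) ∘ₗ εc.lTensor C := by ext x y; simp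
  rw [h1, comp_assoc, hε]
  ext c
  simp [Algebra.algebraMap_eq_smul_one]

end Conv

section Hopf

open Coalgebra HopfAlgebra

variable {H : Type*} [Ring H] [HopfAlgebra F H]

local notation "Δ" => (Coalgebra.comul (R := F) (A := H))
local notation "ε" => (Coalgebra.counit (R := F) (A := H))
local notation "S" => (HopfAlgebra.antipode (R := F) (A := H))

/-- comultiplication on `H ⊗ H`. -/
noncomputable def Δ₂ : H ⊗[F] H →ₗ[F] (H ⊗[F] H) ⊗[F] (H ⊗[F] H) :=
  (tensorTensorTensorComm F H H H H).toLinearMap ∘ₗ map Δ Δ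

/-- counit on `H ⊗ H`. -/
noncomputable def ε₂ : H ⊗[F] H →ₗ[F] F := mul' F F ∘ₗ map ε ε

lemma Δ₂_tmul (x y : H) :
    Δ₂ (F := F) (x ⊗ₜ[F] y)
      = (tensorTensorTensorComm F H H H H) ((Δ x) ⊗ₜ[F] (Δ y)) := by
  simp [Δ₂]

lemma counit₂_right :
    rTensor (H ⊗[F] H) (ε₂ (F := F) (H := H)) ∘ₗ Δ₂
      = (TensorProduct.mk F F (H ⊗[F] H)) 1 := by
  have h1 : rTensor (H ⊗[F] H) (ε₂ (F := F) (H := H)) ∘ₗ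
      (tensorTensorTensorComm F H H H H).toLinearMap
      = rTensor (H ⊗[F] H) (mul' F F) ∘ₗ
        (tensorTensorTensorComm F F H F H).toLinearMap ∘ₗ
        map (rTensor H ε) (rTensor H ε) := by
    ext a b c d; simp [ε₂]
  refine TensorProduct.ext' fun x y => ?_
  have h2 := LinearMap.congr_fun h1 ((Δ x) ⊗ₜ[F] (Δ y))
  simp only [comp_apply, LinearEquiv.coe_coe, map_tmul] at h2
  simp only [comp_apply, Δ₂_tmul, LinearEquiv.coe_coe, h2,
    Coalgebra.rTensor_counit_comul, tensorTensorTensorComm_tmul, rTensor_tmul,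
    mul'_apply, one_mul, TensorProduct.mk_apply]

lemma counit₂_left :
    lTensor (H ⊗[F] H) (ε₂ (F := F) (H := H)) ∘ₗ Δ₂
      = (TensorProduct.mk F (H ⊗[F] H) F).flip 1 := by
  have h1 : lTensor (H ⊗[F] H) (ε₂ (F := F) (H := H)) ∘ₗ
      (tensorTensorTensorComm F H H H H).toLinearMap
      = lTensor (H ⊗[F] H) (mul' F F) ∘ₗ
        (tensorTensorTensorComm F H F H F).toLinearMap ∘ₗ
        map (lTensor H ε) (lTensor H ε) := by
    ext a b c d; simp [ε₂]
  refine TensorProduct.ext' fun x y => ?_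
  have h2 := LinearMap.congr_fun h1 ((Δ x) ⊗ₜ[F] (Δ y))
  simp only [comp_apply, LinearEquiv.coe_coe, map_tmul] at h2
  simp only [comp_apply, Δ₂_tmul, LinearEquiv.coe_coe, h2,
    Coalgebra.lTensor_counit_comul, tensorTensorTensorComm_tmul, lTensor_tmul,
    mul'_apply, one_mul, TensorProduct.mk_apply, flip_apply]

lemma coassoc₂ :
    (TensorProduct.assoc F (H ⊗[F] H) (H ⊗[F] H) (H ⊗[F] H)).toLinearMap ∘ₗ
        rTensor (H ⊗[F] H) (Δ₂ (F := F) (H := H)) ∘ₗ Δ₂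
      = lTensor (H ⊗[F] H) (Δ₂ (F := F) (H := H)) ∘ₗ Δ₂ := by
  have hL : rTensor (H ⊗[F] H) (Δ₂ (F := F) (H := H)) ∘ₗ
        (tensorTensorTensorComm F H H H H).toLinearMap
      = rTensor (H ⊗[F] H) (tensorTensorTensorComm F H H H H).toLinearMap ∘ₗ
        (tensorTensorTensorComm F (H ⊗[F] H) H (H ⊗[F] H) H).toLinearMap ∘ₗ
        map (rTensor H Δ) (rTensor H Δ) := by
    ext a b c d; simp [Δ₂]
  have hR : lTensor (H ⊗[F] H) (Δ₂ (F := F) (H := H)) ∘ₗ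
        (tensorTensorTensorComm F H H H H).toLinearMap
      = lTensor (H ⊗[F] H) (tensorTensorTensorComm F H H H H).toLinearMap ∘ₗ
        (tensorTensorTensorComm F H (H ⊗[F] H) H (H ⊗[F] H)).toLinearMap ∘ₗ
        map (lTensor H Δ) (lTensor H Δ) := by
    ext a b c d; simp [Δ₂]
  have shuffle :
      (TensorProduct.assoc F (H ⊗[F] H) (H ⊗[F] H) (H ⊗[F] H)).toLinearMap ∘ₗ
        rTensor (H ⊗[F] H) (tensorTensorTensorComm F H H H H).toLinearMap ∘ₗ
        (tensorTensorTensorComm F (H ⊗[F] H) H (H ⊗[F] H) H).toLinearMap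
      = lTensor (H ⊗[F] H) (tensorTensorTensorComm F H H H H).toLinearMap ∘ₗ
        (tensorTensorTensorComm F H (H ⊗[F] H) H (H ⊗[F] H)).toLinearMap ∘ₗ
        map (TensorProduct.assoc F H H H).toLinearMap
          (TensorProduct.assoc F H H H).toLinearMap := by
    ext a b c d e f; simp
  refine TensorProduct.ext' fun x y => ?_
  have hcoh : ∀ z : H, (TensorProduct.assoc F H H H) ((rTensor H Δ) (Δ z))
      = (lTensor H Δ) (Δ z) := fun z => by
    have := LinearMap.congr_fun (Coalgebra.coassoc (R := F) (A := H)) z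
    simpa using this
  have hLx := LinearMap.congr_fun hL ((Δ x) ⊗ₜ[F] (Δ y))
  have hRx := LinearMap.congr_fun hR ((Δ x) ⊗ₜ[F] (Δ y))
  simp only [comp_apply, LinearEquiv.coe_coe, map_tmul] at hLx hRx
  have hsh := LinearMap.congr_fun shuffle
      (((rTensor H Δ) (Δ x)) ⊗ₜ[F] ((rTensor H Δ) (Δ y)))
  simp only [comp_apply, LinearEquiv.coe_coe, map_tmul] at hsh
  simp only [comp_apply, Δ₂_tmul, LinearEquiv.coe_coe, hLx, hRx, hsh, hcoh]

lemma map_mul'_ttc (s t : H ⊗[F] H) :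
    map (mul' F H) (mul' F H) ((tensorTensorTensorComm F H H H H) (s ⊗ₜ[F] t))
      = s * t := by
  induction s using TensorProduct.induction_on with
  | zero => simp
  | tmul a b =>
    induction t using TensorProduct.induction_on with
    | zero => simp
    | tmul c d => simp [Algebra.TensorProduct.tmul_mul_tmul]
    | add t₁ t₂ h₁ h₂ => simp [tmul_add, mul_add, h₁, h₂]
  | add s₁ s₂ h₁ h₂ => simp [add_tmul, add_mul, h₁, h₂]

lemma mulmul_comp_Δ₂ :
    map (mul' F H) (mul' F H) ∘ₗ (Δ₂ (F := F) (H := H)) = Δ ∘ₗ mul' F H := by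
  refine TensorProduct.ext' fun x y => ?_
  simp only [comp_apply, Δ₂_tmul, LinearEquiv.coe_coe, map_mul'_ttc, mul'_apply,
    Bialgebra.comul_mul]

lemma conv_mu_rho :
    conv Δ₂ (mul' F H) (S ∘ₗ mul' F H)
      = (Algebra.linearMap F H) ∘ₗ (ε₂ (F := F) (H := H)) := by
  unfold conv
  have h1 : map (mul' F H) ((S) ∘ₗ mul' F H)
      = lTensor H S ∘ₗ map (mul' F H) (mul' F H) := by
    ext a b c d; simp
  rw [h1, comp_assoc, mulmul_comp_Δ₂]
  have h2 : mul' F H ∘ₗ (lTensor H S ∘ₗ Δ ∘ₗ mul' F H)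
      = (mul' F H ∘ₗ lTensor H S ∘ₗ Δ) ∘ₗ mul' F H := by
    simp only [comp_assoc]
  rw [h2, HopfAlgebra.mul_antipode_lTensor_comul]
  refine TensorProduct.ext' fun x y => ?_
  simp [ε₂]

lemma conv_nu_mu :
    conv Δ₂ (mul' F H ∘ₗ map S S ∘ₗ (TensorProduct.comm F H H).toLinearMap) (mul' F H)
      = (Algebra.linearMap F H) ∘ₗ (ε₂ (F := F) (H := H)) := by
  set q : H ⊗[F] H →ₗ[F] H :=
    mul' F H ∘ₗ (TensorProduct.comm F H H).toLinearMap ∘ₗ lTensor H S with hq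
  set L : H ⊗[F] (H ⊗[F] H) →ₗ[F] H :=
    mul' F H ∘ₗ rTensor H q ∘ₗ (TensorProduct.assoc F H H H).symm.toLinearMap with hLdef
  set w : H ⊗[F] H →ₗ[F] H := mul' F H ∘ₗ rTensor H S with hw
  have claimA : mul' F H ∘ₗ
        map (mul' F H ∘ₗ map S S ∘ₗ (TensorProduct.comm F H H).toLinearMap) (mul' F H) ∘ₗ
        (tensorTensorTensorComm F H H H H).toLinearMap
      = L ∘ₗ rTensor (H ⊗[F] H) w := by
    ext a b c d
    simp [hq, hLdef, hw, mul_assoc]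
  have claimB : ∀ t : H ⊗[F] H, L ((1 : H) ⊗ₜ[F] t) = w t := by
    have : L ∘ₗ (TensorProduct.mk F H (H ⊗[F] H)) 1 = w := by
      ext c d; simp [hq, hLdef, hw]
    exact fun t => LinearMap.congr_fun this t
  refine TensorProduct.ext' fun x y => ?_
  have hA := LinearMap.congr_fun claimA ((Δ x) ⊗ₜ[F] (Δ y))
  simp only [comp_apply, LinearEquiv.coe_coe, rTensor_tmul] at hA
  have hwx : w (Δ x) = algebraMap F H (ε x) := by
    simpa [hw] using HopfAlgebra.mul_antipode_rTensor_comul_apply (R := F) x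
  have hwy : w (Δ y) = algebraMap F H (ε y) := by
    simpa [hw] using HopfAlgebra.mul_antipode_rTensor_comul_apply (R := F) y
  calc (mul' F H ∘ₗ
        map (mul' F H ∘ₗ map S S ∘ₗ (TensorProduct.comm F H H).toLinearMap) (mul' F H) ∘ₗ
        Δ₂) (x ⊗ₜ[F] y)
      = L ((w (Δ x)) ⊗ₜ[F] (Δ y)) := by
        simp only [comp_apply, Δ₂_tmul, LinearEquiv.coe_coe]; exact hA
    _ = (ε x) • L ((1 : H) ⊗ₜ[F] (Δ y)) := by
        rw [hwx, Algebra.algebraMap_eq_smul_one, ← smul_tmul', map_smul]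
    _ = (ε x) • algebraMap F H (ε y) := by rw [claimB, hwy]
    _ = ((Algebra.linearMap F H) ∘ₗ ε₂) (x ⊗ₜ[F] y) := by
        simp [ε₂, Algebra.smul_def]

theorem antipode_mul_rev (a b : H) :
    S (a * b) = S b * S a := by
  have h1 := conv_mu_rho (F := F) (H := H)
  have h2 := conv_nu_mu (F := F) (H := H)
  have key : (S) ∘ₗ mul' F H
      = mul' F H ∘ₗ map S S ∘ₗ (TensorProduct.comm F H H).toLinearMap := by
    calc (S) ∘ₗ mul' F H
        = conv Δ₂ ((Algebra.linearMap F H) ∘ₗ (ε₂ (F := F) (H := H)))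
            ((S) ∘ₗ mul' F H) := (conv_unit_left _ _ counit₂_right _).symm
      _ = conv Δ₂ (conv Δ₂
            (mul' F H ∘ₗ map S S ∘ₗ (TensorProduct.comm F H H).toLinearMap) (mul' F H))
            ((S) ∘ₗ mul' F H) := by rw [h2]
      _ = conv Δ₂ (mul' F H ∘ₗ map S S ∘ₗ (TensorProduct.comm F H H).toLinearMap)
            (conv Δ₂ (mul' F H) ((S) ∘ₗ mul' F H)) := conv_assoc _ coassoc₂ _ _ _
      _ = conv Δ₂ (mul' F H ∘ₗ map S S ∘ₗ (TensorProduct.comm F H H).toLinearMap)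
            ((Algebra.linearMap F H) ∘ₗ (ε₂ (F := F) (H := H))) := by rw [h1]
      _ = mul' F H ∘ₗ map S S ∘ₗ (TensorProduct.comm F H H).toLinearMap :=
            conv_unit_right _ _ counit₂_left _
  have := LinearMap.congr_fun key (a ⊗ₜ[F] b)
  simpa using this

theorem counit_antipode (h : H) : ε (S h) = ε h := by
  have h0 : (Algebra.linearMap F F) ∘ₗ ε = (ε : H →ₗ[F] F) := by
    refine LinearMap.ext fun x => ?_
    simp [Algebra.linearMap_apply]
  have h1 : conv Δ (ε ∘ₗ S) ε = (ε ∘ₗ S : H →ₗ[F] F) := by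
    conv_lhs => rw [← h0]
    exact conv_unit_right _ _ Coalgebra.lTensor_counit_comp_comul _
  have h2 : conv Δ (ε ∘ₗ S) ε = (ε : H →ₗ[F] F) := by
    unfold conv
    have h3 : mul' F F ∘ₗ map ((ε : H →ₗ[F] F) ∘ₗ S) ε
        = (ε : H →ₗ[F] F) ∘ₗ mul' F H ∘ₗ rTensor H S := by
      ext a b; simp
    rw [show mul' F F ∘ₗ map ((ε : H →ₗ[F] F) ∘ₗ S) ε ∘ₗ Δ
        = (mul' F F ∘ₗ map ((ε : H →ₗ[F] F) ∘ₗ S) ε) ∘ₗ Δ from by simp only [comp_assoc], h3]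
    have h4 : ((ε : H →ₗ[F] F) ∘ₗ mul' F H ∘ₗ rTensor H S) ∘ₗ Δ
        = (ε : H →ₗ[F] F) ∘ₗ (mul' F H ∘ₗ rTensor H S ∘ₗ Δ) := by
      simp only [comp_assoc]
    rw [h4, HopfAlgebra.mul_antipode_rTensor_comul]
    refine LinearMap.ext fun x => ?_
    simp
  have := LinearMap.congr_fun (h1.symm.trans h2) h
  simpa using this

end Hopf

end HopfAux


open TensorProduct LinearMap

namespace HopfAux

section Adj

variable {F : Type*} [Field F] {H : Type*} [Ring H] [HopfAlgebra F H]
variable {C : Type*} [Ring C] [Algebra F C]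

local notation "Δ" => (Coalgebra.comul (R := F) (A := H))
local notation "ε" => (Coalgebra.counit (R := F) (A := H))
local notation "S" => (HopfAlgebra.antipode (R := F) (A := H))

/-- the bilinear part of `adjAct`. -/
noncomputable def adjBil (ι : H →ₐ[F] C) : H ⊗[F] H →ₗ[F] C →ₗ[F] C :=
  TensorProduct.lift ((LinearMap.llcomp F C C C).compl₁₂
      ((LinearMap.mul F C).comp ι.toLinearMap)
      (((LinearMap.mul F C).flip).comp
        (ι.toLinearMap ∘ₗ (HopfAlgebra.antipode (R := F) (A := H)))))

lemma adjAct_eq (ι : H →ₐ[F] C) : adjAct ι = adjBil ι ∘ₗ Δ := rfl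

lemma adjBil_tmul (ι : H →ₐ[F] C) (x y : H) (a : C) :
    adjBil ι (x ⊗ₜ[F] y) a = ι x * (a * ι (S y)) := by
  simp [adjBil]

lemma adjBil_mul (ι : H →ₐ[F] C) (s t : H ⊗[F] H) :
    adjBil ι (s * t) = adjBil ι s ∘ₗ adjBil ι t := by
  induction s using TensorProduct.induction_on with
  | zero => simp
  | tmul x y =>
    induction t using TensorProduct.induction_on with
    | zero => simp
    | tmul x' y' =>
      refine LinearMap.ext fun a => ?_
      simp [Algebra.TensorProduct.tmul_mul_tmul, adjBil_tmul, map_mul,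
        antipode_mul_rev, mul_assoc]
    | add t₁ t₂ h₁ h₂ =>
      refine LinearMap.ext fun a => ?_
      simp only [mul_add, map_add, h₁, h₂, LinearMap.add_apply, comp_apply]
  | add s₁ s₂ h₁ h₂ =>
    refine LinearMap.ext fun a => ?_
    simp only [add_mul, map_add, h₁, h₂, LinearMap.add_apply, comp_apply]

lemma adjAct_mul_eq (ι : H →ₐ[F] C) (h' h : H) :
    adjAct ι (h' * h) = adjAct ι h' ∘ₗ adjAct ι h := by
  rw [adjAct_eq]
  simp only [comp_apply, Bialgebra.comul_mul, adjBil_mul]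

lemma adjAct_natural {B : Type*} [Ring B] [Algebra F B] (φ : C →ₐ[F] B)
    (ι : H →ₐ[F] C) (h : H) (a : C) :
    φ (adjAct ι h a) = adjAct (φ.comp ι) h (φ a) := by
  have key : ∀ t : H ⊗[F] H, φ (adjBil ι t a) = adjBil (φ.comp ι) t (φ a) := by
    intro t
    induction t using TensorProduct.induction_on with
    | zero => simp
    | tmul x y => simp [adjBil_tmul, map_mul]
    | add t₁ t₂ h₁ h₂ => simp only [map_add, LinearMap.add_apply, map_add, h₁, h₂]
  rw [adjAct_eq, adjAct_eq]
  exact key _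

lemma actOnV_tmul {V 𝒜 : Type*} [AddCommGroup V] [Module F V] [Ring 𝒜] [Algebra F 𝒜]
    (ιH : H →ₐ[F] 𝒜) (ιV : V →ₗ[F] 𝒜) (h : H) (v : V) :
    actOnV ιH ιV (h ⊗ₜ[F] v) = adjAct ιH h (ιV v) := by
  simp [actOnV]

end Adj

section Model

variable {F : Type*} [Field F] {H V : Type*} [Ring H] [HopfAlgebra F H]
  [AddCommGroup V] [Module F V]

local notation "Δ" => (Coalgebra.comul (R := F) (A := H))
local notation "ε" => (Coalgebra.counit (R := F) (A := H))
local notation "S" => (HopfAlgebra.antipode (R := F) (A := H))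

/-- the representation of `H` on `H × (H ⊗ V)`. -/
noncomputable def repH : H →ₐ[F] Module.End F (H × (H ⊗[F] V)) :=
  AlgHom.ofLinearMap
    { toFun := fun h =>
        (LinearMap.mul F H h).prodMap (((LinearMap.mul F H) h).rTensor V)
      map_add' := fun h h' => by
        refine LinearMap.ext fun w => ?_
        simp [map_add, rTensor_add]
      map_smul' := fun c h => by
        refine LinearMap.ext fun w => ?_
        simp [map_smul, rTensor_smul] }
    (by
      have h1 : (LinearMap.mul F H) (1 : H) = LinearMap.id := by
        refine LinearMap.ext fun x => ?_
        simp
      refine LinearMap.ext fun w => ?_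
      simp [h1])
    (by
      intro h h'
      have hm : (LinearMap.mul F H) (h * h')
          = (LinearMap.mul F H h) ∘ₗ (LinearMap.mul F H h') := by
        refine LinearMap.ext fun x => ?_
        simp [mul_assoc]
      refine LinearMap.ext fun w => ?_
      simp [hm, rTensor_comp, Module.End.mul_apply])

@[simp] lemma repH_apply (h : H) (w : H × (H ⊗[F] V)) :
    (repH (F := F) (V := V) h) w
      = (h * w.1, ((LinearMap.mul F H h).rTensor V) w.2) := rfl

/-- the map `V → End (H × (H ⊗ V))`. -/
noncomputable def repV : V →ₗ[F] Module.End F (H × (H ⊗[F] V)) where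
  toFun v := LinearMap.prod 0
    ((LinearMap.toSpanSingleton F (H ⊗[F] V) ((1 : H) ⊗ₜ[F] v)) ∘ₗ
      (ε) ∘ₗ (LinearMap.fst F H (H ⊗[F] V)))
  map_add' v v' := by
    refine LinearMap.ext fun w => ?_
    simp [tmul_add, smul_add]
  map_smul' c v := by
    refine LinearMap.ext fun w => Prod.ext (by simp) ?_
    simp only [LinearMap.prod_apply, Function.prod, LinearMap.smul_apply, comp_apply,
      LinearMap.toSpanSingleton_apply, LinearMap.fst_apply, tmul_smul, RingHom.id_apply]
    rw [smul_comm]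
    simp

@[simp] lemma repV_apply (v : V) (w : H × (H ⊗[F] V)) :
    (repV (F := F) v) w = ((0 : H), (ε w.1) • ((1 : H) ⊗ₜ[F] v)) := rfl

/-- read off the `H ⊗ V` component of the image of `(1,0)`. -/
noncomputable def recover : Module.End F (H × (H ⊗[F] V)) →ₗ[F] H ⊗[F] V where
  toFun T := (T ((1 : H), 0)).2
  map_add' T T' := by simp
  map_smul' c T := by simp

@[simp] lemma recover_apply (T : Module.End F (H × (H ⊗[F] V))) :
    recover (F := F) T = (T ((1 : H), 0)).2 := rfl

end Model

end HopfAux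

namespace HopfAux

section ModelKey

variable {F : Type*} [Field F] {H V : Type*} [Ring H] [HopfAlgebra F H]
  [AddCommGroup V] [Module F V]

local notation "Δ" => (Coalgebra.comul (R := F) (A := H))
local notation "ε" => (Coalgebra.counit (R := F) (A := H))
local notation "S" => (HopfAlgebra.antipode (R := F) (A := H))

lemma model_key (h : H) (v : V) :
    recover (adjAct (repH (F := F) (V := V)) h (repV v)) = h ⊗ₜ[F] v := by
  have claim1 : (recover (F := F) (H := H) (V := V)) ∘ₗ
        ((adjBil (F := F) (H := H) (C := Module.End F (H × (H ⊗[F] V))) (repH (F := F) (V := V))).flip (repV v))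
      = ((TensorProduct.mk F H V).flip v) ∘ₗ (TensorProduct.rid F H).toLinearMap ∘ₗ
          lTensor H ((ε) ∘ₗ S) := by
    refine TensorProduct.ext' fun x y => ?_
    simp only [comp_apply, flip_apply, adjBil_tmul, LinearEquiv.coe_coe,
      lTensor_tmul, TensorProduct.rid_tmul, TensorProduct.mk_apply]
    simp only [Module.End.mul_apply, recover_apply, repH_apply, repV_apply, mul_one,
      mul_zero, map_zero, map_smul, rTensor_tmul, LinearMap.mul_apply', smul_tmul']
  have hεS : ((ε) ∘ₗ S : H →ₗ[F] F) = ε := LinearMap.ext counit_antipode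
  rw [hεS] at claim1
  have h2 := LinearMap.congr_fun claim1 (Δ h)
  simp only [comp_apply, flip_apply, LinearEquiv.coe_coe] at h2
  rw [adjAct_eq]
  simp only [comp_apply]
  rw [h2, Coalgebra.lTensor_counit_comul (R := F) h, TensorProduct.rid_tmul]
  simp

end ModelKey

end HopfAux

/-- in the algebra `𝒜 = 𝒜(H,V)` freely generated by a Hopf algebra `H` and a
vector space `V`, the `H`-submodule `H·V` generated by `V` under the adjoint action is
naturally isomorphic, as an `H`-module, to the free `H`-module `H ⊗ V`: the map
`h ⊗ v ↦ h · v` is injective, `H`-equivariant, with image `H·V`. -/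
theorem HV_free_module (F : Type*) (H V 𝒜 : Type u) [Field F] [Ring H] [HopfAlgebra F H]
    [AddCommGroup V] [Module F V] [Ring 𝒜] [Algebra F 𝒜]
    (ιH : H →ₐ[F] 𝒜) (ιV : V →ₗ[F] 𝒜)
    (hUP : ∀ (B : Type u) (_ : Ring B) (_ : Algebra F B) (f : H →ₐ[F] B) (g : V →ₗ[F] B),
      ∃! φ : 𝒜 →ₐ[F] B, φ.comp ιH = f ∧ φ.toLinearMap ∘ₗ ιV = g)
    (HV : Submodule F 𝒜)
    (hHV : HV = Submodule.span F {x : 𝒜 | ∃ (h : H) (v : V), x = adjAct ιH h (ιV v)}) :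
    Function.Injective (actOnV ιH ιV) ∧
    LinearMap.range (actOnV ιH ιV) = HV ∧
    (∀ (h' h : H) (v : V),
      actOnV ιH ιV ((h' * h) ⊗ₜ[F] v) = adjAct ιH h' (actOnV ιH ιV (h ⊗ₜ[F] v))) := by
  obtain ⟨φ, ⟨hφH, hφV⟩, -⟩ :=
    hUP (Module.End F (H × (H ⊗[F] V))) inferInstance inferInstance
      (HopfAux.repH (F := F) (V := V)) (HopfAux.repV (F := F) (H := H) (V := V))
  have left_inv : ∀ z : H ⊗[F] V,
      HopfAux.recover (φ (actOnV ιH ιV z)) = z := by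
    have key : (HopfAux.recover (F := F) (H := H) (V := V)) ∘ₗ
        φ.toLinearMap ∘ₗ actOnV ιH ιV = LinearMap.id := by
      refine TensorProduct.ext' fun h v => ?_
      simp only [comp_apply, AlgHom.toLinearMap_apply, HopfAux.actOnV_tmul, id_coe, id_eq]
      rw [HopfAux.adjAct_natural φ ιH h (ιV v), hφH]
      have hv : φ (ιV v) = HopfAux.repV (F := F) v := LinearMap.congr_fun hφV v
      rw [hv]
      exact HopfAux.model_key h v
    exact fun z => LinearMap.congr_fun key z
  refine ⟨?_, ?_, ?_⟩
  · intro z₁ z₂ hz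
    calc z₁ = HopfAux.recover (φ (actOnV ιH ιV z₁)) := (left_inv z₁).symm
      _ = HopfAux.recover (φ (actOnV ιH ιV z₂)) := by rw [hz]
      _ = z₂ := left_inv z₂
  · rw [hHV]
    apply le_antisymm
    · rintro x ⟨z, rfl⟩
      induction z using TensorProduct.induction_on with
      | zero => simp
      | tmul h v =>
        exact Submodule.subset_span ⟨h, v, by rw [HopfAux.actOnV_tmul]⟩
      | add a b ha hb =>
        rw [map_add]; exact Submodule.add_mem _ ha hb
    · rw [Submodule.span_le]
      rintro x ⟨h, v, rfl⟩
      exact ⟨h ⊗ₜ[F] v, HopfAux.actOnV_tmul ιH ιV h v⟩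
  · intro h' h v
    rw [HopfAux.actOnV_tmul, HopfAux.actOnV_tmul, HopfAux.adjAct_mul_eq]
    rfl
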